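/- For every g ∈ SL₂(ℚ) and every x ∈ ℝ with g·x ≠ ∞, there exists a piecewise-SL₂(ℚ) homeomorphism h of ℝ with all breakpoints in ℚ which coincides with the projective action of g on a neighbourhood of x; moreover h can be chosen to be a C¹-diffeomorphism of ℝ. -/

import Mathlib

open Matrix Filter Topology MeasureTheory

noncomputable section

/-- The group of homeomorphisms of a topological space, under composition. -/
instance Homeomorph.instGroup' {X : Type*} [TopologicalSpace X] : Group (X ≃ₜ X) where
  mul a b := b.trans a
  one := Homeomorph.refl X
  inv := Homeomorph.symm
  mul_assoc a b c := Homeomorph.ext fun _ => rfl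
  one_mul a := Homeomorph.ext fun _ => rfl
  mul_one a := Homeomorph.ext fun _ => rfl
  inv_mul_cancel a := Homeomorph.ext fun x => a.symm_apply_apply x

@[simp] lemma Homeomorph.mul_apply' {X : Type*} [TopologicalSpace X]
    (a b : X ≃ₜ X) (x : X) : (a * b) x = a (b x) := rfl

@[simp] lemma Homeomorph.inv_coe {X : Type*} [TopologicalSpace X]
    (a : X ≃ₜ X) : (a⁻¹ : X ≃ₜ X) = a.symm := rfl

abbrev SL2 (R : Type*) [CommRing R] := Matrix.SpecialLinearGroup (Fin 2) R

namespace PP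

/-- Denominator of the Möbius transformation attached to `g`. -/
def mdenom (g : SL2 ℝ) (x : ℝ) : ℝ := g.1 1 0 * x + g.1 1 1

/-- The Möbius transformation attached to `g`. -/
def moebius (g : SL2 ℝ) (x : ℝ) : ℝ := (g.1 0 0 * x + g.1 0 1) / (g.1 1 0 * x + g.1 1 1)

/-- `g` is a local (projective) piece of the homeomorphism `h` at the point `x`. -/
def IsLocalPiece (h : ℝ ≃ₜ ℝ) (g : SL2 ℝ) (x : ℝ) : Prop :=
  mdenom g x ≠ 0 ∧ ∀ᶠ y in 𝓝 x, h y = moebius g y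

/-- `h` is piecewise given by Möbius transformations of matrices in `M`:
outside of a finite set of breakpoints, `h` is locally a Möbius map from `M`. -/
def IsPiecewiseIn (M : Set (SL2 ℝ)) (h : ℝ ≃ₜ ℝ) : Prop :=
  ∃ B : Finset ℝ, ∀ x ∉ B, ∃ g ∈ M, IsLocalPiece h g x

/-- A breakpoint of `h` : a point where `h` is not locally projective. -/
def IsBreakpoint (h : ℝ ≃ₜ ℝ) (x : ℝ) : Prop := ¬ ∃ g : SL2 ℝ, IsLocalPiece h g x

/-- Matrices with entries in the subring `A`. -/
def entriesIn (A : Subring ℝ) : Set (SL2 ℝ) := {g | ∀ i j, g.1 i j ∈ A}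

lemma one_entriesIn (A : Subring ℝ) : (1 : SL2 ℝ) ∈ entriesIn A := by
  intro i j
  by_cases h : i = j <;>
    simp [entriesIn, Matrix.SpecialLinearGroup.coe_one, Matrix.one_apply, h, A.one_mem, A.zero_mem]

lemma mul_entriesIn {A : Subring ℝ} {g₁ g₂ : SL2 ℝ} (h₁ : g₁ ∈ entriesIn A)
    (h₂ : g₂ ∈ entriesIn A) : g₁ * g₂ ∈ entriesIn A := by
  intro i j
  rw [Matrix.SpecialLinearGroup.coe_mul, Matrix.mul_apply]
  exact Subring.sum_mem A fun k _ => A.mul_mem (h₁ i k) (h₂ k j)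

lemma inv_entriesIn {A : Subring ℝ} {g : SL2 ℝ} (h : g ∈ entriesIn A) :
    g⁻¹ ∈ entriesIn A := by
  intro i j
  have : (g⁻¹ : SL2 ℝ).1 = (g.1).adjugate := Matrix.SpecialLinearGroup.coe_inv g
  rw [this, Matrix.adjugate_fin_two]
  fin_cases i <;> fin_cases j <;>
    simp [Matrix.cons_val_zero, Matrix.cons_val_one] <;>
    first
      | exact h 1 1
      | exact h 0 1
      | exact h 1 0
      | exact A.neg_mem (h 0 1)
      | exact A.neg_mem (h 1 0)
      | exact h 0 0

lemma det_eq (g : SL2 ℝ) : g.1 0 0 * g.1 1 1 - g.1 0 1 * g.1 1 0 = 1 := by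
  have := g.2
  rwa [Matrix.det_fin_two] at this

/-- Composition of Möbius transformations (denominator part). -/
lemma mdenom_mul (g₁ g₂ : SL2 ℝ) (x : ℝ) (h₂ : mdenom g₂ x ≠ 0) :
    mdenom (g₁ * g₂) x = mdenom g₁ (moebius g₂ x) * mdenom g₂ x := by
  unfold mdenom moebius at *
  rw [Matrix.SpecialLinearGroup.coe_mul, Matrix.mul_apply, Matrix.mul_apply, Fin.sum_univ_two,
    Fin.sum_univ_two]
  field_simp
  ring

lemma mdenom_mul_ne (g₁ g₂ : SL2 ℝ) (x : ℝ) (h₂ : mdenom g₂ x ≠ 0)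
    (h₁ : mdenom g₁ (moebius g₂ x) ≠ 0) : mdenom (g₁ * g₂) x ≠ 0 := by
  rw [mdenom_mul g₁ g₂ x h₂]; exact mul_ne_zero h₁ h₂

lemma moebius_mul (g₁ g₂ : SL2 ℝ) (x : ℝ) (h₂ : mdenom g₂ x ≠ 0)
    (h₁ : mdenom g₁ (moebius g₂ x) ≠ 0) :
    moebius (g₁ * g₂) x = moebius g₁ (moebius g₂ x) := by
  have hden := mdenom_mul_ne g₁ g₂ x h₂ h₁
  unfold mdenom moebius at *
  simp only [Matrix.SpecialLinearGroup.coe_mul, Matrix.mul_apply, Fin.sum_univ_two] at *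
  rw [div_eq_div_iff hden h₁]
  field_simp
  ring

lemma inv_entry_00 (g : SL2 ℝ) : (g⁻¹ : SL2 ℝ).1 0 0 = g.1 1 1 := by
  simp [Matrix.SpecialLinearGroup.coe_inv, Matrix.adjugate_fin_two]
lemma inv_entry_01 (g : SL2 ℝ) : (g⁻¹ : SL2 ℝ).1 0 1 = -g.1 0 1 := by
  simp [Matrix.SpecialLinearGroup.coe_inv, Matrix.adjugate_fin_two]
lemma inv_entry_10 (g : SL2 ℝ) : (g⁻¹ : SL2 ℝ).1 1 0 = -g.1 1 0 := by
  simp [Matrix.SpecialLinearGroup.coe_inv, Matrix.adjugate_fin_two]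
lemma inv_entry_11 (g : SL2 ℝ) : (g⁻¹ : SL2 ℝ).1 1 1 = g.1 0 0 := by
  simp [Matrix.SpecialLinearGroup.coe_inv, Matrix.adjugate_fin_two]

lemma moebius_one (x : ℝ) : moebius 1 x = x := by
  unfold moebius
  simp [Matrix.SpecialLinearGroup.coe_one, Matrix.one_apply]

lemma mdenom_one (x : ℝ) : mdenom 1 x = 1 := by
  unfold mdenom
  simp [Matrix.SpecialLinearGroup.coe_one, Matrix.one_apply]

lemma mdenom_inv (g : SL2 ℝ) (x : ℝ) (h : mdenom g x ≠ 0) :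
    mdenom g⁻¹ (moebius g x) = 1 / mdenom g x := by
  have hdet := det_eq g
  unfold mdenom moebius at *
  rw [inv_entry_10, inv_entry_11]
  field_simp
  linear_combination hdet

lemma moebius_inv (g : SL2 ℝ) (x : ℝ) (h : mdenom g x ≠ 0) :
    mdenom g⁻¹ (moebius g x) ≠ 0 ∧ moebius g⁻¹ (moebius g x) = x := by
  have h1 : mdenom g⁻¹ (moebius g x) = 1 / mdenom g x := mdenom_inv g x h
  have hne : mdenom g⁻¹ (moebius g x) ≠ 0 := by rw [h1]; exact one_div_ne_zero h
  refine ⟨hne, ?_⟩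
  rw [← moebius_mul g⁻¹ g x h hne, inv_mul_cancel, moebius_one]

lemma mdenom_continuous (g : SL2 ℝ) : Continuous (mdenom g) := by
  unfold mdenom; fun_prop

lemma eventually_mdenom_ne (g : SL2 ℝ) {x : ℝ} (h : mdenom g x ≠ 0) :
    ∀ᶠ y in 𝓝 x, mdenom g y ≠ 0 :=
  (mdenom_continuous g).continuousAt.eventually_ne h

lemma IsLocalPiece.mul {a b : ℝ ≃ₜ ℝ} {g₁ g₂ : SL2 ℝ} {x : ℝ}
    (h₁ : IsLocalPiece a g₁ (b x)) (h₂ : IsLocalPiece b g₂ x) :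
    IsLocalPiece (a * b) (g₁ * g₂) x := by
  obtain ⟨d₂, e₂⟩ := h₂
  obtain ⟨d₁, e₁⟩ := h₁
  have hbx : b x = moebius g₂ x := e₂.self_of_nhds
  have d₁' : mdenom g₁ (moebius g₂ x) ≠ 0 := hbx ▸ d₁
  refine ⟨mdenom_mul_ne g₁ g₂ x d₂ d₁', ?_⟩
  have hmap : ∀ᶠ y in 𝓝 x, a (b y) = moebius g₁ (b y) := by
    have hb : Filter.map b (𝓝 x) = 𝓝 (b x) := b.map_nhds_eq x
    rw [← hb] at e₁
    exact e₁
  have hd1ev : ∀ᶠ y in 𝓝 x, mdenom g₁ (b y) ≠ 0 := by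
    have hb : Filter.map b (𝓝 x) = 𝓝 (b x) := b.map_nhds_eq x
    have := eventually_mdenom_ne g₁ d₁
    rw [← hb] at this
    exact this
  filter_upwards [e₂, hmap, hd1ev, eventually_mdenom_ne g₂ d₂] with y hy₂ hy₁ hyd₁ hyd₂
  have hyd₁' : mdenom g₁ (moebius g₂ y) ≠ 0 := by rw [← hy₂]; exact hyd₁
  calc (a * b) y = a (b y) := rfl
    _ = moebius g₁ (b y) := hy₁
    _ = moebius g₁ (moebius g₂ y) := by rw [hy₂]
    _ = moebius (g₁ * g₂) y := (moebius_mul g₁ g₂ y hyd₂ hyd₁').symm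

lemma IsLocalPiece.inv {h : ℝ ≃ₜ ℝ} {g : SL2 ℝ} {x : ℝ} (hp : IsLocalPiece h g x) :
    IsLocalPiece h⁻¹ g⁻¹ (h x) := by
  obtain ⟨d, e⟩ := hp
  have hx : h x = moebius g x := e.self_of_nhds
  refine ⟨by rw [hx]; exact (moebius_inv g x d).1, ?_⟩
  have hb : Filter.map h (𝓝 x) = 𝓝 (h x) := h.map_nhds_eq x
  rw [← hb, Filter.eventually_map]
  filter_upwards [e, eventually_mdenom_ne g d] with y hy hyd
  calc (h⁻¹ : ℝ ≃ₜ ℝ) (h y) = y := h.symm_apply_apply y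
    _ = moebius g⁻¹ (h y) := by rw [hy]; exact ((moebius_inv g y hyd).2).symm

lemma isLocalPiece_one (x : ℝ) : IsLocalPiece 1 1 x := by
  refine ⟨by rw [mdenom_one]; exact one_ne_zero, ?_⟩
  filter_upwards with y
  rw [moebius_one]
  rfl

/-- The group of piecewise-`SL₂(A)` homeomorphisms of the real line. -/
def PW (A : Subring ℝ) : Subgroup (ℝ ≃ₜ ℝ) where
  carrier := {h | IsPiecewiseIn (entriesIn A) h}
  one_mem' := ⟨∅, fun x _ => ⟨1, one_entriesIn A, isLocalPiece_one x⟩⟩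
  mul_mem' := by
    rintro a b ⟨Ba, hBa⟩ ⟨Bb, hBb⟩
    refine ⟨Bb ∪ Ba.image b.symm, fun x hx => ?_⟩
    rw [Finset.mem_union, not_or] at hx
    obtain ⟨hxb, hxa⟩ := hx
    obtain ⟨g₂, hg₂A, hg₂⟩ := hBb x hxb
    have hbx : b x ∉ Ba := by
      intro hmem
      exact hxa (Finset.mem_image.2 ⟨b x, hmem, b.symm_apply_apply x⟩)
    obtain ⟨g₁, hg₁A, hg₁⟩ := hBa (b x) hbx
    exact ⟨g₁ * g₂, mul_entriesIn hg₁A hg₂A, hg₁.mul hg₂⟩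
  inv_mem' := by
    rintro h ⟨B, hB⟩
    refine ⟨B.image h, fun y hy => ?_⟩
    have hxB : h.symm y ∉ B := by
      intro hmem
      exact hy (Finset.mem_image.2 ⟨h.symm y, hmem, h.apply_symm_apply y⟩)
    obtain ⟨g, hgA, hg⟩ := hB (h.symm y) hxB
    have := hg.inv
    rw [h.apply_symm_apply y] at this
    exact ⟨g⁻¹, inv_entriesIn hgA, this⟩

/-- Real fixed points of hyperbolic elements of `SL₂(A)`. -/
def FixHyp (A : Subring ℝ) : Set ℝ :=
  {x | ∃ g : SL2 ℝ, g ∈ entriesIn A ∧ |Matrix.trace g.1| > 2 ∧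
        mdenom g x ≠ 0 ∧ moebius g x = x}

lemma trace_conj (g q : SL2 ℝ) :
    Matrix.trace ((g⁻¹ * q * g : SL2 ℝ) : Matrix (Fin 2) (Fin 2) ℝ) = Matrix.trace q.1 := by
  rw [Matrix.SpecialLinearGroup.coe_mul, Matrix.SpecialLinearGroup.coe_mul,
    Matrix.trace_mul_comm, ← Matrix.mul_assoc, ← Matrix.SpecialLinearGroup.coe_mul,
    mul_inv_cancel, Matrix.SpecialLinearGroup.coe_one, Matrix.one_mul]

lemma FixHyp.conj {A : Subring ℝ} {g : SL2 ℝ} {x : ℝ} (hgA : g ∈ entriesIn A)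
    (hd : mdenom g x ≠ 0) (hfix : moebius g x ∈ FixHyp A) : x ∈ FixHyp A := by
  obtain ⟨q, hqA, hqtr, hqd, hqfix⟩ := hfix
  refine ⟨g⁻¹ * q * g, mul_entriesIn (mul_entriesIn (inv_entriesIn hgA) hqA) hgA,
    by rw [trace_conj]; exact hqtr, ?_, ?_⟩
  all_goals
    have hden1 : mdenom (q * g) x ≠ 0 := mdenom_mul_ne q g x hd hqd
    have hmo1 : moebius (q * g) x = moebius g x := by
      rw [moebius_mul q g x hd hqd, hqfix]
    have hden2 : mdenom g⁻¹ (moebius (q * g) x) ≠ 0 := by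
      rw [hmo1]; exact (moebius_inv g x hd).1
  · rw [mul_assoc]
    exact mdenom_mul_ne g⁻¹ (q * g) x hden1 hden2
  · rw [mul_assoc, moebius_mul g⁻¹ (q * g) x hden1 hden2, hmo1]
    exact (moebius_inv g x hd).2

/-- `h` is locally an `SL₂(A)`-Möbius map away from the set `Φ`. -/
def LocallyIn (A : Subring ℝ) (Φ : Set ℝ) (h : ℝ ≃ₜ ℝ) : Prop :=
  ∀ x : ℝ, x ∉ Φ → ∃ g ∈ entriesIn A, IsLocalPiece h g x

/-- The complement of `Φ` is invariant under Möbius maps with entries in `A`. -/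
def MoebiusInv (A : Subring ℝ) (Φ : Set ℝ) : Prop :=
  ∀ g ∈ entriesIn A, ∀ x : ℝ, mdenom g x ≠ 0 → x ∉ Φ → moebius g x ∉ Φ

lemma LocallyIn.mul {A : Subring ℝ} {Φ : Set ℝ} (hΦ : MoebiusInv A Φ) {a b : ℝ ≃ₜ ℝ}
    (ha : LocallyIn A Φ a) (hb : LocallyIn A Φ b) : LocallyIn A Φ (a * b) := by
  intro x hx
  obtain ⟨g₂, hg₂A, hg₂⟩ := hb x hx
  have hbx : b x ∉ Φ := by
    have : b x = moebius g₂ x := hg₂.2.self_of_nhds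
    rw [this]
    exact hΦ g₂ hg₂A x hg₂.1 hx
  obtain ⟨g₁, hg₁A, hg₁⟩ := ha (b x) hbx
  exact ⟨g₁ * g₂, mul_entriesIn hg₁A hg₂A, hg₁.mul hg₂⟩

/-- The group of piecewise-`SL₂(A)` homeomorphisms of the line all of whose
breakpoints lie in the set `Φ`. -/
def BreakIn (A : Subring ℝ) (Φ : Set ℝ) (hΦ : MoebiusInv A Φ) : Subgroup (ℝ ≃ₜ ℝ) where
  carrier := {h | IsPiecewiseIn (entriesIn A) h ∧ LocallyIn A Φ h ∧ LocallyIn A Φ h⁻¹}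
  one_mem' := by
    refine ⟨(PW A).one_mem', ?_, ?_⟩ <;>
      · intro x _
        exact ⟨1, one_entriesIn A, isLocalPiece_one x⟩
  mul_mem' := by
    rintro a b ⟨hapw, ha, ha'⟩ ⟨hbpw, hb, hb'⟩
    refine ⟨(PW A).mul_mem' hapw hbpw, LocallyIn.mul hΦ ha hb, ?_⟩
    rw [_root_.mul_inv_rev]
    exact LocallyIn.mul hΦ hb' ha'
  inv_mem' := by
    rintro h ⟨hpw, h₁, h₂⟩
    refine ⟨(PW A).inv_mem' hpw, h₂, ?_⟩
    rw [inv_inv]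
    exact h₁

lemma fixHyp_moebiusInv (A : Subring ℝ) : MoebiusInv A (FixHyp A) :=
  fun g hg x hd hx hmem => hx (FixHyp.conj hg hd hmem)

/-- The group `H(A)`: piecewise-`SL₂(A)` homeomorphisms of the line whose
breakpoints are fixed points of hyperbolic elements of `SL₂(A)`. -/
def HGroup (A : Subring ℝ) : Subgroup (ℝ ≃ₜ ℝ) := BreakIn A (FixHyp A) (fixHyp_moebiusInv A)

/-- The ring `ℤ[1/S]` of `S`-integers, as a subring of `ℚ`. -/
def SIntQ (S : Set ℕ) : Subring ℚ := Subring.closure {x : ℚ | ∃ p ∈ S, x = (p : ℚ)⁻¹}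

/-- The ring `ℤ[1/S]` of `S`-integers, as a subring of `ℝ`. -/
def SIntR (S : Set ℕ) : Subring ℝ := Subring.closure {x : ℝ | ∃ p ∈ S, x = (p : ℝ)⁻¹}

/-- The group `Γ_S` of piecewise-`SL₂(ℤ[1/S])` homeomorphisms of the line. -/
def Gamma (S : Set ℕ) : Subgroup (ℝ ≃ₜ ℝ) := PW (SIntR S)

/-- `ℚ` as a subring of `ℝ`. -/
def ratSubring : Subring ℝ := (Rat.castHom ℝ).range

/-- `ℤ` as a subring of `ℝ`. -/
def intSubring : Subring ℝ := (Int.castRingHom ℝ).range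

/-- The group `H(ℚ)` of piecewise-`SL₂(ℚ)` homeomorphisms of the line. -/
def HQ : Subgroup (ℝ ≃ₜ ℝ) := PW ratSubring

lemma ratSubring_div_mem {x y : ℝ} (hx : x ∈ ratSubring) (hy : y ∈ ratSubring) :
    x / y ∈ ratSubring := by
  obtain ⟨q, rfl⟩ := RingHom.mem_range.1 hx
  obtain ⟨r, rfl⟩ := RingHom.mem_range.1 hy
  refine RingHom.mem_range.2 ⟨q / r, ?_⟩
  simp [Rat.cast_div]

lemma moebius_mem_rat {g : SL2 ℝ} (hg : g ∈ entriesIn ratSubring) {y : ℝ}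
    (hy : y ∈ ratSubring) : moebius g y ∈ ratSubring := by
  unfold moebius
  exact ratSubring_div_mem
    (ratSubring.add_mem (ratSubring.mul_mem (hg 0 0) hy) (hg 0 1))
    (ratSubring.add_mem (ratSubring.mul_mem (hg 1 0) hy) (hg 1 1))

lemma rat_moebiusInv {A : Subring ℝ} (hA : A ≤ ratSubring) :
    MoebiusInv A (ratSubring : Set ℝ) := by
  intro g hg x hd hx hmem
  apply hx
  have : moebius g⁻¹ (moebius g x) = x := (moebius_inv g x hd).2
  rw [← this]
  exact moebius_mem_rat (fun i j => hA (inv_entriesIn hg i j)) hmem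

lemma intSubring_le_rat : intSubring ≤ ratSubring := by
  rintro x ⟨n, rfl⟩
  refine RingHom.mem_range.2 ⟨(n : ℚ), ?_⟩
  simp

/-- Thompson's group `F` realized as `H_ℚ(ℤ)`: piecewise-`SL₂(ℤ)` homeomorphisms
of the line with rational breakpoints. -/
def Thompson : Subgroup (ℝ ≃ₜ ℝ) :=
  BreakIn intSubring (ratSubring : Set ℝ) (rat_moebiusInv intSubring_le_rat)

/-- The group `H_ℚ(ℚ)` of piecewise-`SL₂(ℚ)` homeomorphisms of the line with
rational breakpoints. -/
def HQrat : Subgroup (ℝ ≃ₜ ℝ) :=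
  BreakIn ratSubring (ratSubring : Set ℝ) (rat_moebiusInv le_rfl)

/-- A bounded real-valued function. -/
def Bdd {X : Type*} (f : X → ℝ) : Prop := ∃ C, ∀ x, |f x| ≤ C

/-- A mean: a normalized positive linear functional on bounded functions. -/
structure MeanOn (X : Type*) where
  toFun : (X → ℝ) → ℝ
  add' : ∀ f g : X → ℝ, Bdd f → Bdd g → toFun (f + g) = toFun f + toFun g
  smul' : ∀ (c : ℝ) (f : X → ℝ), Bdd f → toFun (c • f) = c * toFun f
  mono' : ∀ f g : X → ℝ, Bdd f → Bdd g → (∀ x, f x ≤ g x) → toFun f ≤ toFun g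
  one' : toFun (fun _ => 1) = 1

/-- A subgroup `H ≤ G` is co-amenable in `G` if there is a `G`-invariant mean on `G/H`. -/
def CoAmenableIn {G : Type*} [Group G] (H : Subgroup G) : Prop :=
  ∃ m : MeanOn (G ⧸ H), ∀ (g : G) (f : (G ⧸ H) → ℝ), Bdd f →
    m.toFun (fun x => f (g • x)) = m.toFun f

end PP

open PP

namespace PP

/-- A rational matrix viewed as a real matrix. -/
def toR (g : SL2 ℚ) : SL2 ℝ := Matrix.SpecialLinearGroup.map (Rat.castHom ℝ) g

/-- A rational matrix viewed as a `p`-adic matrix. -/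
def toPadic (p : ℕ) [Fact p.Prime] (g : SL2 ℚ) : SL2 ℚ_[p] :=
  Matrix.SpecialLinearGroup.map (Rat.castHom ℚ_[p]) g

end PP



lemma hasDerivAt_ite_lt {p d : ℝ} {f₁ f₂ : ℝ → ℝ}
    (h1 : HasDerivAt f₁ d p) (h2 : HasDerivAt f₂ d p) (he : f₁ p = f₂ p) :
    HasDerivAt (fun y => if y < p then f₁ y else f₂ y) d p := by
  have hL : HasDerivWithinAt (fun y => if y < p then f₁ y else f₂ y) d (Set.Iic p) p := by
    refine (h1.hasDerivWithinAt).congr (fun y hy => ?_) (by rw [if_neg (lt_irrefl p), he])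
    rcases (Set.mem_Iic.mp hy).lt_or_eq with h | h
    · rw [if_pos h]
    · subst h; rw [if_neg (lt_irrefl _), he]
  have hR : HasDerivWithinAt (fun y => if y < p then f₁ y else f₂ y) d (Set.Ici p) p := by
    refine (h2.hasDerivWithinAt).congr (fun y hy => ?_) (by rw [if_neg (lt_irrefl p)])
    rw [if_neg (not_lt.2 (Set.mem_Ici.mp hy))]
  have := hL.union hR
  rwa [Set.Iic_union_Ici, hasDerivWithinAt_univ] at this

lemma hasDerivAt_ite_le {p d : ℝ} {f₁ f₂ : ℝ → ℝ}
    (h1 : HasDerivAt f₁ d p) (h2 : HasDerivAt f₂ d p) (he : f₁ p = f₂ p) :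
    HasDerivAt (fun y => if y ≤ p then f₁ y else f₂ y) d p := by
  have hL : HasDerivWithinAt (fun y => if y ≤ p then f₁ y else f₂ y) d (Set.Iic p) p := by
    refine (h1.hasDerivWithinAt).congr (fun y hy => ?_) (by rw [if_pos (le_refl p)])
    rw [if_pos (Set.mem_Iic.mp hy)]
  have hR : HasDerivWithinAt (fun y => if y ≤ p then f₁ y else f₂ y) d (Set.Ici p) p := by
    refine (h2.hasDerivWithinAt).congr (fun y hy => ?_) (by rw [if_pos (le_refl p), he])
    rcases (Set.mem_Ici.mp hy).lt_or_eq with h | h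
    · rw [if_neg (not_le.2 h)]
    · subst h; rw [if_pos le_rfl, he]
  have := hL.union hR
  rwa [Set.Iic_union_Ici, hasDerivWithinAt_univ] at this

lemma toR_entry (g : SL2 ℚ) (i j : Fin 2) : (toR g).1 i j = ((g.1 i j : ℚ) : ℝ) := rfl

/-- For every `g ∈ SL₂(ℚ)` and `x ∈ ℝ` with `g·x ≠ ∞`, there is a
piecewise-`SL₂(ℚ)` homeomorphism of `ℝ` with rational breakpoints agreeing with `g`
near `x`; moreover it can be chosen to be a `C¹`-diffeomorphism of `ℝ`. -/
theorem rational_smooth_cut_and_paste (g : SL2 ℚ) (x : ℝ) (hx : mdenom (toR g) x ≠ 0) :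
    (∃ h : ℝ ≃ₜ ℝ, h ∈ HQrat ∧ ∀ᶠ y in 𝓝 x, h y = moebius (toR g) y) ∧
    (∃ h : ℝ ≃ₜ ℝ, h ∈ HQrat ∧ ContDiff ℝ 1 (h : ℝ → ℝ) ∧ ContDiff ℝ 1 (h.symm : ℝ → ℝ) ∧
      ∀ᶠ y in 𝓝 x, h y = moebius (toR g) y) := by
  classical
  obtain ⟨aq, bq, cq, dq, hga, hgb, hgc, hgd⟩ :
      ∃ aq bq cq dq : ℚ, g.1 0 0 = aq ∧ g.1 0 1 = bq ∧ g.1 1 0 = cq ∧ g.1 1 1 = dq :=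
    ⟨_, _, _, _, rfl, rfl, rfl, rfl⟩
  have hdetq : aq * dq - bq * cq = 1 := by
    have h2 := g.2
    rw [Matrix.det_fin_two, hga, hgb, hgc, hgd] at h2
    exact h2
  have hdetr : (aq : ℝ) * dq - (bq : ℝ) * cq = 1 := by exact_mod_cast hdetq
  rw [mdenom, toR_entry, toR_entry, hgc, hgd] at hx
  -- choose rational endpoints p < x < q with no pole on [p,q]
  set ε : ℝ := |(cq : ℝ) * x + dq| / (|(cq : ℝ)| + 1) with hε
  have hεpos : 0 < ε := by
    apply div_pos (abs_pos.2 hx); positivity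
  obtain ⟨p, hp1, hp2⟩ := exists_rat_btwn (show x - ε < x by linarith)
  obtain ⟨q, hq1, hq2⟩ := exists_rat_btwn (show x < x + ε by linarith)
  have hpq : (p : ℝ) < q := lt_trans hp2 hq1
  have hden : ∀ y : ℝ, (p : ℝ) ≤ y → y ≤ (q : ℝ) → (cq : ℝ) * y + dq ≠ 0 := by
    intro y h1 h2 h0
    have hxy : |x - y| < ε := by
      rw [abs_lt]; constructor <;> linarith
    have hkey : |(cq : ℝ) * x + dq| = |(cq : ℝ)| * |x - y| := by
      rw [← abs_mul]
      congr 1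
      linear_combination h0
    have hmul : ε * (|(cq : ℝ)| + 1) = |(cq : ℝ) * x + dq| := by
      rw [hε]; field_simp
    have hA : 0 < |(cq : ℝ) * x + dq| := abs_pos.2 hx
    nlinarith [abs_nonneg ((cq : ℝ)), abs_nonneg (x - y)]
  have hpd : (cq : ℝ) * p + dq ≠ 0 := hden p le_rfl hpq.le
  have hqd : (cq : ℝ) * q + dq ≠ 0 := hden q hpq.le le_rfl
  have hαq : cq * p + dq ≠ 0 := by
    intro h0; apply hpd
    rw [show ((cq : ℝ) * p + dq) = ((cq * p + dq : ℚ) : ℝ) by push_cast; ring, h0]; simp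
  have hγq : cq * q + dq ≠ 0 := by
    intro h0; apply hqd
    rw [show ((cq : ℝ) * q + dq) = ((cq * q + dq : ℚ) : ℝ) by push_cast; ring, h0]; simp
  -- the matrices
  obtain ⟨L, hL⟩ : ∃ L : SL2 ℚ,
      L.1 = !![(cq * p + dq)⁻¹, aq * p + bq - p * (cq * p + dq)⁻¹; 0, cq * p + dq] :=
    ⟨⟨_, by rw [Matrix.det_fin_two_of]; simp [inv_mul_cancel₀ hαq]⟩, rfl⟩
  obtain ⟨R, hR⟩ : ∃ R : SL2 ℚ,
      R.1 = !![(cq * q + dq)⁻¹, aq * q + bq - q * (cq * q + dq)⁻¹; 0, cq * q + dq] :=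
    ⟨⟨_, by rw [Matrix.det_fin_two_of]; simp [inv_mul_cancel₀ hγq]⟩, rfl⟩
  have hL00 : L.1 0 0 = (cq * p + dq)⁻¹ := by rw [hL]; simp
  have hL01 : L.1 0 1 = aq * p + bq - p * (cq * p + dq)⁻¹ := by rw [hL]; simp
  have hL10 : L.1 1 0 = 0 := by rw [hL]; simp
  have hL11 : L.1 1 1 = cq * p + dq := by rw [hL]; simp
  have hR00 : R.1 0 0 = (cq * q + dq)⁻¹ := by rw [hR]; simp
  have hR01 : R.1 0 1 = aq * q + bq - q * (cq * q + dq)⁻¹ := by rw [hR]; simp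
  have hR10 : R.1 1 0 = 0 := by rw [hR]; simp
  have hR11 : R.1 1 1 = cq * q + dq := by rw [hR]; simp
  -- the pieces
  set dLv : ℝ := (((cq : ℝ) * p + dq) ^ 2)⁻¹ with hdLv
  set dRv : ℝ := (((cq : ℝ) * q + dq) ^ 2)⁻¹ with hdRv
  have hdLpos : 0 < dLv := by rw [hdLv]; positivity
  have hdRpos : 0 < dRv := by rw [hdRv]; positivity
  set fM : ℝ → ℝ := fun y => ((aq : ℝ) * y + bq) / ((cq : ℝ) * y + dq) with hfM
  set fL : ℝ → ℝ := fun y => fM p + (y - p) * dLv with hfL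
  set fR : ℝ → ℝ := fun y => fM q + (y - q) * dRv with hfR
  set f : ℝ → ℝ := fun y => if y < (p : ℝ) then fL y else if y ≤ (q : ℝ) then fM y else fR y
    with hf
  set Dv : ℝ → ℝ := fun y => (((cq : ℝ) * (min (max y (p : ℝ)) (q : ℝ)) + dq) ^ 2)⁻¹ with hDv
  -- identifications with Möbius maps
  have hMo : ∀ y : ℝ, moebius (toR g) y = fM y := by
    intro y
    simp only [moebius, toR_entry, hga, hgb, hgc, hgd, hfM]
  have hMoL : ∀ y : ℝ, moebius (toR L) y = fL y := by
    intro y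
    simp only [moebius, toR_entry, hL00, hL01, hL10, hL11, hfL, hfM, hdLv]
    push_cast
    rw [zero_mul, zero_add]
    field_simp
    ring
  have hMoR : ∀ y : ℝ, moebius (toR R) y = fR y := by
    intro y
    simp only [moebius, toR_entry, hR00, hR01, hR10, hR11, hfR, hfM, hdRv]
    push_cast
    rw [zero_mul, zero_add]
    field_simp
    ring
  have hmdL : ∀ y : ℝ, mdenom (toR L) y ≠ 0 := by
    intro y
    simp only [mdenom, toR_entry, hL10, hL11]
    push_cast
    simpa using hpd
  have hmdR : ∀ y : ℝ, mdenom (toR R) y ≠ 0 := by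
    intro y
    simp only [mdenom, toR_entry, hR10, hR11]
    push_cast
    simpa using hqd
  have hmdM : ∀ y : ℝ, mdenom (toR g) y = (cq : ℝ) * y + dq := by
    intro y; simp only [mdenom, toR_entry, hgc, hgd]
  -- derivatives of the pieces
  have hDL : ∀ y : ℝ, HasDerivAt fL dLv y := by
    intro y
    rw [hfL]
    simpa using (((hasDerivAt_id y).sub_const (p : ℝ)).mul_const dLv).const_add (fM p)
  have hDR : ∀ y : ℝ, HasDerivAt fR dRv y := by
    intro y
    rw [hfR]
    simpa using (((hasDerivAt_id y).sub_const (q : ℝ)).mul_const dRv).const_add (fM q)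
  have hDM : ∀ y : ℝ, (cq : ℝ) * y + dq ≠ 0 →
      HasDerivAt fM ((((cq : ℝ) * y + dq) ^ 2)⁻¹) y := by
    intro y hy
    have h1 : HasDerivAt (fun z : ℝ => (aq : ℝ) * z + bq) (aq : ℝ) y := by
      simpa using ((hasDerivAt_id y).const_mul (aq : ℝ)).add_const (bq : ℝ)
    have h2 : HasDerivAt (fun z : ℝ => (cq : ℝ) * z + dq) (cq : ℝ) y := by
      simpa using ((hasDerivAt_id y).const_mul (cq : ℝ)).add_const (dq : ℝ)
    have h3 := h1.div h2 hy
    rw [hfM]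
    rw [show (aq : ℝ) * ((cq : ℝ) * y + dq) - ((aq : ℝ) * y + bq) * cq = 1 from by
      linear_combination hdetr, ← inv_eq_one_div] at h3
    exact h3
  -- junction values
  have hLM : fL (p : ℝ) = fM (p : ℝ) := by rw [hfL]; simp
  have hRM : fR (q : ℝ) = fM (q : ℝ) := by rw [hfR]; simp
  -- the global derivative
  have hder : ∀ y : ℝ, HasDerivAt f (Dv y) y := by
    intro y
    rcases lt_trichotomy y (p : ℝ) with hy | hy | hy
    · have hDvy : Dv y = dLv := by
        simp only [hDv, hdLv]
        rw [max_eq_right hy.le, min_eq_left hpq.le]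
      rw [hDvy]
      refine (hDL y).congr_of_eventuallyEq ?_
      filter_upwards [Iio_mem_nhds hy] with z hz
      simp only [hf]
      rw [if_pos (show z < (p : ℝ) from hz)]
    · have hDvy : Dv y = dLv := by
        simp only [hDv, hdLv, hy]
        rw [max_self, min_eq_left hpq.le]
      rw [hDvy]
      have hM' : HasDerivAt fM dLv (p : ℝ) := by
        have := hDM (p : ℝ) hpd; rwa [← hdLv] at this
      rw [hy]
      refine (hasDerivAt_ite_lt (hDL (p : ℝ)) hM' hLM).congr_of_eventuallyEq ?_
      filter_upwards [Iio_mem_nhds hpq] with z hz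
      simp only [hf]
      rcases lt_or_ge z (p : ℝ) with h | h
      · rw [if_pos h, if_pos h]
      · rw [if_neg (not_lt.2 h), if_neg (not_lt.2 h),
          if_pos (le_of_lt (show z < (q : ℝ) from hz))]
    · rcases lt_trichotomy y (q : ℝ) with hy2 | hy2 | hy2
      · have hDvy : Dv y = (((cq : ℝ) * y + dq) ^ 2)⁻¹ := by
          simp only [hDv]
          rw [max_eq_left hy.le, min_eq_left hy2.le]
        rw [hDvy]
        refine (hDM y (hden y hy.le hy2.le)).congr_of_eventuallyEq ?_
        filter_upwards [Ioo_mem_nhds hy hy2] with z hz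
        simp only [hf]
        rw [if_neg (not_lt.2 hz.1.le), if_pos hz.2.le]
      · have hDvy : Dv y = dRv := by
          simp only [hDv, hdRv, hy2]
          rw [max_eq_left hpq.le, min_self]
        rw [hDvy]
        have hM' : HasDerivAt fM dRv (q : ℝ) := by
          have := hDM (q : ℝ) hqd; rwa [← hdRv] at this
        rw [hy2]
        refine (hasDerivAt_ite_le hM' (hDR (q : ℝ)) hRM.symm).congr_of_eventuallyEq ?_
        filter_upwards [Ioi_mem_nhds hpq] with z hz
        simp only [hf]
        rw [if_neg (not_lt.2 (le_of_lt (show (p : ℝ) < z from hz)))]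
      · have hDvy : Dv y = dRv := by
          simp only [hDv, hdRv]
          rw [min_eq_right (le_max_of_le_left hy2.le), ]
        rw [hDvy]
        refine (hDR y).congr_of_eventuallyEq ?_
        filter_upwards [Ioi_mem_nhds hy2] with z hz
        simp only [hf]
        rw [if_neg (not_lt.2 (hpq.trans (show (q : ℝ) < z from hz)).le),
          if_neg (not_le.2 (show (q : ℝ) < z from hz))]
  have hclamp : ∀ y : ℝ, (cq : ℝ) * (min (max y (p : ℝ)) (q : ℝ)) + dq ≠ 0 := fun y =>
    hden _ (le_min (le_max_right _ _) hpq.le) (min_le_right _ _)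
  have hpos : ∀ y : ℝ, 0 < Dv y := by
    intro y
    simp only [hDv]
    have := hclamp y
    positivity
  have hcontD : Continuous Dv := by
    rw [hDv]
    have h1 : Continuous fun y : ℝ => (cq : ℝ) * (min (max y (p : ℝ)) (q : ℝ)) + dq := by
      fun_prop
    exact ((h1.pow 2).inv₀ fun y => pow_ne_zero 2 (hclamp y))
  have hdiff : Differentiable ℝ f := fun y => (hder y).differentiableAt
  have hderiv : deriv f = Dv := funext fun y => (hder y).deriv
  have hsm : StrictMono f := strictMono_of_deriv_pos fun y => by rw [hderiv]; exact hpos y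
  have hsurj : Function.Surjective f := by
    have hevR : f =ᶠ[atTop] fR := by
      filter_upwards [eventually_ge_atTop ((q : ℝ) + 1)] with z hz
      simp only [hf]
      rw [if_neg (not_lt.2 (by linarith)), if_neg (not_le.2 (by linarith))]
    have hevL : f =ᶠ[atBot] fL := by
      filter_upwards [eventually_le_atBot ((p : ℝ) - 1)] with z hz
      simp only [hf]
      rw [if_pos (by linarith)]
    have htR : Tendsto fR atTop atTop := by
      rw [hfR]
      apply tendsto_atTop_add_const_left
      exact (tendsto_atTop_add_const_right _ _ tendsto_id).atTop_mul_const hdRpos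
    have htL : Tendsto fL atBot atBot := by
      rw [hfL]
      apply tendsto_atBot_add_const_left
      exact (tendsto_atBot_add_const_right _ _ tendsto_id).atBot_mul_const hdLpos
    exact hdiff.continuous.surjective (htR.congr' hevR.symm) (htL.congr' hevL.symm)
  -- the homeomorphism
  set h : ℝ ≃ₜ ℝ := (StrictMono.orderIsoOfSurjective f hsm hsurj).toHomeomorph with hh
  have hcoe : ⇑h = f := rfl
  have hsymm : ∀ z : ℝ, h (h.symm z) = z := fun z => h.apply_symm_apply z
  -- eventual agreement near x
  have hev : ∀ᶠ y in 𝓝 x, h y = moebius (toR g) y := by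
    filter_upwards [Ioo_mem_nhds hp2 hq1] with z hz
    rw [hcoe, hMo]
    simp only [hf]
    rw [if_neg (not_lt.2 hz.1.le), if_pos hz.2.le]
  -- entries of toR matrices are rational
  have hent : ∀ g' : SL2 ℚ, toR g' ∈ entriesIn ratSubring := by
    intro g' i j
    exact RingHom.mem_range.2 ⟨g'.1 i j, rfl⟩
  -- local pieces
  have hloc : ∀ x₀ : ℝ, x₀ ≠ (p : ℝ) → x₀ ≠ (q : ℝ) →
      ∃ g' ∈ entriesIn ratSubring, IsLocalPiece h g' x₀ := by
    intro x₀ hxp hxq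
    rcases lt_trichotomy x₀ (p : ℝ) with h1 | h1 | h1
    · refine ⟨toR L, hent L, hmdL x₀, ?_⟩
      filter_upwards [Iio_mem_nhds h1] with z hz
      rw [hcoe, hMoL]
      simp only [hf]
      rw [if_pos (show z < (p : ℝ) from hz)]
    · exact absurd h1 hxp
    · rcases lt_trichotomy x₀ (q : ℝ) with h2 | h2 | h2
      · refine ⟨toR g, hent g, ?_, ?_⟩
        · rw [hmdM]; exact hden x₀ h1.le h2.le
        · filter_upwards [Ioo_mem_nhds h1 h2] with z hz
          rw [hcoe, hMo]
          simp only [hf]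
          rw [if_neg (not_lt.2 hz.1.le), if_pos hz.2.le]
      · exact absurd h2 hxq
      · refine ⟨toR R, hent R, hmdR x₀, ?_⟩
        filter_upwards [Ioi_mem_nhds h2] with z hz
        rw [hcoe, hMoR]
        simp only [hf]
        rw [if_neg (not_lt.2 (hpq.trans (show (q : ℝ) < z from hz)).le),
          if_neg (not_le.2 (show (q : ℝ) < z from hz))]
  -- values at the breakpoints are rational
  have hhp : h (p : ℝ) ∈ ratSubring := by
    have he : h (p : ℝ) = (((aq * p + bq) / (cq * p + dq) : ℚ) : ℝ) := by
      rw [hcoe]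
      simp only [hf]
      rw [if_neg (lt_irrefl _), if_pos hpq.le, hfM]
      push_cast
      ring
    rw [he]
    exact RingHom.mem_range.2 ⟨_, rfl⟩
  have hhq : h (q : ℝ) ∈ ratSubring := by
    have he : h (q : ℝ) = (((aq * q + bq) / (cq * q + dq) : ℚ) : ℝ) := by
      rw [hcoe]
      simp only [hf]
      rw [if_neg (not_lt.2 hpq.le), if_pos le_rfl, hfM]
      push_cast
      ring
    rw [he]
    exact RingHom.mem_range.2 ⟨_, rfl⟩
  have hratp : ((p : ℝ)) ∈ ratSubring := RingHom.mem_range.2 ⟨p, rfl⟩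
  have hratq : ((q : ℝ)) ∈ ratSubring := RingHom.mem_range.2 ⟨q, rfl⟩
  -- membership in HQrat
  have hmem : h ∈ HQrat := by
    refine ⟨⟨{(p : ℝ), (q : ℝ)}, fun x₀ hx₀ => ?_⟩, fun x₀ hx₀ => ?_, fun y hy => ?_⟩
    · simp only [Finset.mem_insert, Finset.mem_singleton, not_or] at hx₀
      exact hloc x₀ hx₀.1 hx₀.2
    · refine hloc x₀ (fun e => hx₀ ?_) (fun e => hx₀ ?_)
      · rw [e]; exact hratp
      · rw [e]; exact hratq
    · have hxp : h.symm y ≠ (p : ℝ) := by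
        intro e
        apply hy
        have h2 := hsymm y
        rw [e] at h2
        rw [← h2]
        exact hhp
      have hxq : h.symm y ≠ (q : ℝ) := by
        intro e
        apply hy
        have h2 := hsymm y
        rw [e] at h2
        rw [← h2]
        exact hhq
      obtain ⟨g', hg', hpiece⟩ := hloc (h.symm y) hxp hxq
      refine ⟨g'⁻¹, inv_entriesIn hg', ?_⟩
      have h2 := hpiece.inv
      rwa [hsymm y] at h2
  -- smoothness
  have hcd : ContDiff ℝ 1 (h : ℝ → ℝ) := by
    rw [hcoe]
    exact contDiff_one_iff_deriv.2 ⟨hdiff, by rw [hderiv]; exact hcontD⟩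
  have hder' : ∀ y : ℝ, HasDerivAt (h.symm : ℝ → ℝ) ((Dv (h.symm y))⁻¹) y := by
    intro y
    refine HasDerivAt.of_local_left_inverse h.symm.continuous.continuousAt
      (f' := Dv (h.symm y)) (hder (h.symm y)) (ne_of_gt (hpos _)) ?_
    exact Filter.Eventually.of_forall fun z => hsymm z
  have hcd' : ContDiff ℝ 1 (h.symm : ℝ → ℝ) := by
    refine contDiff_one_iff_deriv.2 ⟨fun y => (hder' y).differentiableAt, ?_⟩
    have hde : deriv (h.symm : ℝ → ℝ) = fun y => (Dv (h.symm y))⁻¹ :=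
      funext fun y => (hder' y).deriv
    rw [hde]
    exact ((hcontD.comp h.symm.continuous).inv₀ fun y => ne_of_gt (hpos _))
  exact ⟨⟨h, hmem, hev⟩, ⟨h, hmem, hcd, hcd', hev⟩⟩
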